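/- arXiv:2604.00042 — 3 statements merged into one kernel-verified Lean document; each statement's English description precedes it below -/
import Mathlib

section
/- (Koopman–von Neumann lemma, one direction) Let (a_n) be a bounded sequence of nonnegative real numbers. If (1/n) ∑_{j=0}^{n-1} a_j → 0, then there exists a set D ⊆ ℕ of density zero such that a_n → 0 as n → ∞ along the complement of D. -/
open Filter Finset Topology

/-- A set `D ⊆ ℕ` has density zero if `#(D ∩ {0,…,n-1})/n → 0`. -/
def DensityZero (D : Set ℕ) : Prop :=
  Tendsto (fun n : ℕ => (∑ j ∈ Finset.range n, Set.indicator D (fun _ => (1 : ℝ)) j) / n)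
    atTop (𝓝 0)

theorem koopman_von_neumann (a : ℕ → ℝ) (M : ℝ) (hbdd : ∀ n, a n ≤ M)
    (hnonneg : ∀ n, 0 ≤ a n)
    (hces : Tendsto (fun n : ℕ => (∑ j ∈ Finset.range n, a j) / n) atTop (𝓝 0)) :
    ∃ D : Set ℕ, DensityZero D ∧
      ∀ ε > (0 : ℝ), ∃ N : ℕ, ∀ n ≥ N, n ∉ D → a n < ε := by
  classical
  -- the level sets
  set E : ℕ → Set ℕ := fun k => {m | 1 / ((k : ℝ) + 1) ≤ a m} with hE
  have hEmono : ∀ k l, k ≤ l → E k ⊆ E l := by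
    intro k l hkl m hm
    have hkl' : (k : ℝ) ≤ l := Nat.cast_le.mpr hkl
    have : 1 / ((l : ℝ) + 1) ≤ 1 / ((k : ℝ) + 1) :=
      one_div_le_one_div_of_le (by positivity) (by linarith)
    exact le_trans this hm
  set c : ℕ → ℕ → ℝ := fun k n => ∑ j ∈ Finset.range n,
    Set.indicator (E k) (fun _ => (1 : ℝ)) j with hc
  have hc_nonneg : ∀ k n, 0 ≤ c k n := fun k n =>
    Finset.sum_nonneg fun j _ => Set.indicator_nonneg (fun _ _ => zero_le_one) j
  have hc_le : ∀ k n, c k n ≤ ((k : ℝ) + 1) * ∑ j ∈ Finset.range n, a j := by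
    intro k n
    rw [Finset.mul_sum]
    apply Finset.sum_le_sum
    intro j _
    by_cases hj : j ∈ E k
    · rw [Set.indicator_of_mem hj]
      have h1 : 1 / ((k : ℝ) + 1) ≤ a j := hj
      rw [div_le_iff₀ (by positivity)] at h1
      nlinarith [hnonneg j]
    · rw [Set.indicator_of_notMem hj]
      have := hnonneg j
      positivity
  have htend : ∀ k, Tendsto (fun n : ℕ => c k n / n) atTop (𝓝 0) := by
    intro k
    have h1 : Tendsto (fun n : ℕ => ((k : ℝ) + 1) * ((∑ j ∈ Finset.range n, a j) / n))
        atTop (𝓝 0) := by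
      simpa using hces.const_mul ((k : ℝ) + 1)
    refine squeeze_zero (fun n => div_nonneg (hc_nonneg k n) (Nat.cast_nonneg n))
      (fun n => ?_) h1
    rw [← mul_div_assoc, div_eq_mul_inv, div_eq_mul_inv]
    exact mul_le_mul_of_nonneg_right (hc_le k n) (inv_nonneg.mpr (Nat.cast_nonneg n))
  have hNk : ∀ k, ∃ N : ℕ, ∀ n ≥ N, c k n / n < 1 / ((k : ℝ) + 1) := by
    intro k
    have h := (htend k).eventually_lt_const (show (0:ℝ) < 1 / ((k:ℝ)+1) by positivity)
    exact eventually_atTop.mp h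
  choose Nk hNk using hNk
  -- the cutoff sequence
  set B : ℕ → ℕ := fun k => Nat.rec 0 (fun k ih => max (ih + 1) (Nk (k + 1))) k with hB
  have hB0 : B 0 = 0 := rfl
  have hBsucc : ∀ k, B (k + 1) = max (B k + 1) (Nk (k + 1)) := fun k => rfl
  have hBstrict : StrictMono B := by
    apply strictMono_nat_of_lt_succ
    intro k
    rw [hBsucc k]
    exact lt_of_lt_of_le (Nat.lt_succ_self _) (le_max_left _ _)
  have hBk : ∀ k, k ≤ B k := fun k => hBstrict.le_apply
  have hBN : ∀ k, 1 ≤ k → Nk k ≤ B k := by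
    intro k hk
    cases k with
    | zero => omega
    | succ k => rw [hBsucc k]; exact le_max_right _ _
  -- the index function
  set idx : ℕ → ℕ := fun n => Nat.findGreatest (fun k => B k ≤ n) n with hidx
  have hidx_le : ∀ n, B (idx n) ≤ n := by
    intro n
    exact Nat.findGreatest_spec (P := fun k => B k ≤ n) (Nat.zero_le n)
      (hB0.le.trans (Nat.zero_le n))
  have hidx_ge : ∀ k n, B k ≤ n → k ≤ idx n := fun k n h =>
    Nat.le_findGreatest (le_trans (hBk k) h) h
  have hidx_mono : ∀ j n, j ≤ n → idx j ≤ idx n := fun j n h =>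
    hidx_ge _ _ (le_trans (hidx_le j) h)
  -- the exceptional set
  set D : Set ℕ := {n | n ∈ E (idx n)} with hD
  have hkey : ∀ ε : ℝ, 0 < ε → ∃ k : ℕ, 1 ≤ k ∧ 1 / ((k : ℝ) + 1) < ε := by
    intro ε hε
    obtain ⟨k0, hk0⟩ := exists_nat_gt (1 / ε)
    refine ⟨k0 + 1, le_add_self, ?_⟩
    have h1 : 1 / ε < ((k0 : ℝ) + 1) + 1 := by push_cast; linarith
    rw [div_lt_iff₀ hε] at h1
    rw [div_lt_iff₀ (by positivity)]
    push_cast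
    linarith
  refine ⟨D, ?_, ?_⟩
  · -- density zero
    rw [DensityZero, Metric.tendsto_atTop]
    intro ε hε
    obtain ⟨k, hk1, hkε⟩ := hkey ε hε
    refine ⟨B k, fun n hn => ?_⟩
    have hidxk : k ≤ idx n := hidx_ge k n hn
    have hsum_nonneg : 0 ≤ ∑ j ∈ Finset.range n, Set.indicator D (fun _ => (1 : ℝ)) j :=
      Finset.sum_nonneg fun j _ => Set.indicator_nonneg (fun _ _ => zero_le_one) j
    have h1 : ∑ j ∈ Finset.range n, Set.indicator D (fun _ => (1 : ℝ)) j ≤ c (idx n) n := by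
      apply Finset.sum_le_sum
      intro j hj
      by_cases hjD : j ∈ D
      · rw [Set.indicator_of_mem hjD]
        have hjE : j ∈ E (idx n) :=
          hEmono _ _ (hidx_mono j n (le_of_lt (Finset.mem_range.mp hj))) hjD
        rw [Set.indicator_of_mem hjE]
      · rw [Set.indicator_of_notMem hjD]
        exact Set.indicator_nonneg (fun _ _ => zero_le_one) j
    have hnN : Nk (idx n) ≤ n :=
      le_trans (hBN (idx n) (le_trans hk1 hidxk)) (hidx_le n)
    have h2 : c (idx n) n / n < 1 / ((idx n : ℝ) + 1) := hNk (idx n) n hnN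
    have h3 : (∑ j ∈ Finset.range n, Set.indicator D (fun _ => (1 : ℝ)) j) / n
        ≤ c (idx n) n / n := by
      rw [div_eq_mul_inv, div_eq_mul_inv]
      exact mul_le_mul_of_nonneg_right h1 (inv_nonneg.mpr (Nat.cast_nonneg n))
    have h4 : 1 / ((idx n : ℝ) + 1) ≤ 1 / ((k : ℝ) + 1) := by
      have : (k : ℝ) ≤ idx n := Nat.cast_le.mpr hidxk
      exact one_div_le_one_div_of_le (by positivity) (by linarith)
    rw [Real.dist_eq, sub_zero,
      abs_of_nonneg (div_nonneg hsum_nonneg (Nat.cast_nonneg n))]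
    linarith
  · -- convergence along the complement
    intro ε hε
    obtain ⟨k, _, hkε⟩ := hkey ε hε
    refine ⟨B k, fun n hn hnD => ?_⟩
    have hidxk : k ≤ idx n := hidx_ge k n hn
    have hnE : n ∉ E (idx n) := hnD
    have h1 : a n < 1 / ((idx n : ℝ) + 1) := by
      by_contra h
      exact hnE (le_of_not_gt h)
    have h4 : 1 / ((idx n : ℝ) + 1) ≤ 1 / ((k : ℝ) + 1) := by
      have : (k : ℝ) ≤ idx n := Nat.cast_le.mpr hidxk
      exact one_div_le_one_div_of_le (by positivity) (by linarith)
    linarith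
end

section
/- (Koopman–von Neumann lemma, converse direction) Let (a_n) be a bounded sequence of nonnegative real numbers. If there exists a density zero set D ⊆ ℕ such that a_n → 0 along the complement of D, then (1/n) ∑_{j=0}^{n-1} a_j → 0. -/
open Filter Finset Topology

theorem koopman_von_neumann_converse (a : ℕ → ℝ) (M : ℝ)
    (hbdd : ∀ n, 0 ≤ a n ∧ a n ≤ M)
    (D : Set ℕ) (hD : DensityZero D)
    (hconv : ∀ ε > (0 : ℝ), ∃ N : ℕ, ∀ n ≥ N, n ∉ D → a n < ε) :
    Tendsto (fun n : ℕ => (∑ j ∈ Finset.range n, a j) / n) atTop (𝓝 0) := by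
  have hM : 0 ≤ M := le_trans (hbdd 0).1 (hbdd 0).2
  have hind : ∀ j, 0 ≤ Set.indicator D (fun _ => (1:ℝ)) j := fun j =>
    Set.indicator_nonneg (fun _ _ => zero_le_one) j
  rw [DensityZero, Metric.tendsto_atTop] at hD
  rw [Metric.tendsto_atTop]
  intro ε hε
  have hε3 : 0 < ε/3 := by linarith
  obtain ⟨N₁, hN₁⟩ := hconv (ε/3) hε3
  have hM1 : 0 < M + 1 := by linarith
  obtain ⟨N₂, hN₂⟩ := hD (ε/3/(M+1)) (by positivity)
  set C := ∑ j ∈ Finset.range N₁, a j with hCdef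
  have hC0 : 0 ≤ C := Finset.sum_nonneg fun j _ => (hbdd j).1
  obtain ⟨N₃, hN₃⟩ := exists_nat_gt (C / (ε/3))
  refine ⟨max (max N₁ N₂) (N₃ + 1), fun n hn => ?_⟩
  have hn1 : N₁ ≤ n := le_trans (le_trans (le_max_left _ _) (le_max_left _ _)) hn
  have hn2 : N₂ ≤ n := le_trans (le_trans (le_max_right _ _) (le_max_left _ _)) hn
  have hn3 : N₃ + 1 ≤ n := le_trans (le_max_right _ _) hn
  have hnpos : (0:ℝ) < n := by
    have : 1 ≤ n := le_trans (Nat.le_add_left 1 N₃) hn3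
    exact_mod_cast Nat.lt_of_lt_of_le Nat.zero_lt_one this
  set S := ∑ j ∈ Finset.range n, Set.indicator D (fun _ => (1:ℝ)) j with hSdef
  have hS0 : 0 ≤ S := Finset.sum_nonneg fun j _ => hind j
  have hCn : C / n < ε/3 := by
    rw [div_lt_iff₀ hnpos]
    have h1 : C < ε/3 * N₃ := by
      rw [div_lt_iff₀ hε3] at hN₃; linarith
    have h2 : (N₃:ℝ) ≤ n := by exact_mod_cast le_trans (Nat.le_succ N₃) hn3
    nlinarith
  have hSn : S / n < ε/3/(M+1) := by
    have := hN₂ n hn2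
    rwa [Real.dist_eq, sub_zero, abs_of_nonneg (div_nonneg hS0 hnpos.le)] at this
  have hsum : ∑ j ∈ Finset.range n, a j ≤ C + (n:ℝ) * (ε/3) + M * S := by
    rw [← Finset.sum_range_add_sum_Ico a hn1]
    have h1 : ∑ j ∈ Finset.Ico N₁ n, a j ≤
        ∑ j ∈ Finset.Ico N₁ n, (ε/3 + M * Set.indicator D (fun _ => (1:ℝ)) j) := by
      apply Finset.sum_le_sum
      intro j hj
      rcases Finset.mem_Ico.mp hj with ⟨hj1, _⟩
      by_cases hjD : j ∈ D
      · rw [Set.indicator_of_mem hjD]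
        have := (hbdd j).2
        linarith
      · have h := (hN₁ j hj1 hjD).le
        have h2 : 0 ≤ M * Set.indicator D (fun _ => (1:ℝ)) j := mul_nonneg hM (hind j)
        linarith
    have h2 : ∑ j ∈ Finset.Ico N₁ n, (ε/3 + M * Set.indicator D (fun _ => (1:ℝ)) j)
        ≤ (n:ℝ) * (ε/3) + M * S := by
      rw [Finset.sum_add_distrib, ← Finset.mul_sum, Finset.sum_const, Nat.card_Ico,
        nsmul_eq_mul]
      have h3 : ((n - N₁ : ℕ):ℝ) ≤ n := by exact_mod_cast Nat.sub_le n N₁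
      have h4 : ∑ j ∈ Finset.Ico N₁ n, Set.indicator D (fun _ => (1:ℝ)) j ≤ S := by
        rw [hSdef, ← Finset.sum_range_add_sum_Ico _ hn1]
        have := Finset.sum_nonneg (fun j (_ : j ∈ Finset.range N₁) => hind j)
        linarith
      nlinarith [mul_le_mul_of_nonneg_left h4 hM]
    linarith
  rw [Real.dist_eq, sub_zero, abs_of_nonneg
    (div_nonneg (Finset.sum_nonneg fun j _ => (hbdd j).1) hnpos.le)]
  have havg : (∑ j ∈ Finset.range n, a j) / n ≤ (C + (n:ℝ) * (ε/3) + M * S) / n := by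
    gcongr
  have heq : (C + (n:ℝ) * (ε/3) + M * S) / n = C/n + ε/3 + M * (S/n) := by
    field_simp
  have hMS : M * (S/n) ≤ ε/3 := by
    have h1 := mul_le_mul_of_nonneg_left hSn.le hM
    have h2 : M * (ε/3/(M+1)) = ε/3 * (M/(M+1)) := by ring
    have h3 : M/(M+1) ≤ 1 := (div_le_one hM1).mpr (by linarith)
    nlinarith
  rw [heq] at havg
  linarith
end

section
/- Let (X, μ) be a probability space, d ≥ 1, and let w_1, …, w_d : X → X be measurable branch maps of a correspondence F such that the Birkhoff-type averages converge: for μ-a.e. z, (1/n) ∑_{j=0}^{n-1} (1/d^j) ∑_{w ∈ (F^j)†(z)} χ_A(w) → μ(A). Let B be measurable. Then lim inf over n of (1/n) ∑_{j=0}^{n-1} μ(F^j(A) ∩ B) ≥ μ(A)μ(B), using that the normalized preimage sum (1/d^j) ∑_{w ∈ (F^j)†(z)} χ_A(w) is bounded by 1 and supported on F^j(A) ∩ (whole space), i.e., pointwise (1/d^j) ∑_{w ∈ (F^j)†(z)} χ_A(w) · χ_B(z) ≤ χ_{F^j(A) ∩ B}(z). -/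
open MeasureTheory Filter Finset Topology

theorem liminf_cesaro_measure_ge {X : Type*} [MeasurableSpace X]
    (μ : Measure X) [IsProbabilityMeasure μ]
    (g : ℕ → X → ℝ) (hgmeas : ∀ j, Measurable (g j))
    (hg01 : ∀ j x, 0 ≤ g j x ∧ g j x ≤ 1)
    (E : ℕ → Set X) (hE : ∀ j, MeasurableSet (E j))
    (B : Set X) (hB : MeasurableSet B)
    (hsupp : ∀ j x, g j x * Set.indicator B (fun _ => (1 : ℝ)) x ≤
      Set.indicator (E j) (fun _ => (1 : ℝ)) x)
    (α : ℝ) (hα : 0 ≤ α)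
    (hconv : ∀ᵐ z ∂μ,
      Tendsto (fun n : ℕ => (∑ j ∈ Finset.range n, g j z) / n) atTop (𝓝 α)) :
    α * (μ B).toReal ≤
      Filter.liminf (fun n : ℕ => (∑ j ∈ Finset.range n, (μ (E j)).toReal) / n) atTop := by
  set f : ℕ → X → ℝ := fun n z =>
    (∑ j ∈ Finset.range n, g j z) / n * Set.indicator B (fun _ => (1 : ℝ)) z with hf
  have hind01 : ∀ z, 0 ≤ Set.indicator B (fun _ => (1 : ℝ)) z ∧
      Set.indicator B (fun _ => (1 : ℝ)) z ≤ 1 := by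
    intro z
    by_cases h : z ∈ B <;> simp [h]
  have havg01 : ∀ n z, 0 ≤ (∑ j ∈ Finset.range n, g j z) / n ∧
      (∑ j ∈ Finset.range n, g j z) / n ≤ 1 := by
    intro n z
    constructor
    · exact div_nonneg (Finset.sum_nonneg fun j _ => (hg01 j z).1) (Nat.cast_nonneg n)
    · rcases Nat.eq_zero_or_pos n with h | h
      · simp [h]
      · rw [div_le_one (by exact_mod_cast h)]
        calc (∑ j ∈ Finset.range n, g j z) ≤ ∑ j ∈ Finset.range n, (1 : ℝ) :=
              Finset.sum_le_sum fun j _ => (hg01 j z).2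
          _ = n := by simp
  have hfb : ∀ n z, ‖f n z‖ ≤ 1 := by
    intro n z
    rw [Real.norm_eq_abs, abs_of_nonneg (mul_nonneg (havg01 n z).1 (hind01 z).1)]
    calc (∑ j ∈ Finset.range n, g j z) / n * Set.indicator B (fun _ => (1 : ℝ)) z
        ≤ 1 * 1 := mul_le_mul (havg01 n z).2 (hind01 z).2 (hind01 z).1 zero_le_one
      _ = 1 := one_mul 1
  have hfmeas : ∀ n, AEStronglyMeasurable (f n) μ := by
    intro n
    exact (((Finset.measurable_sum _ fun j _ => hgmeas j).div_const _).mul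
      (measurable_const.indicator hB)).aestronglyMeasurable
  have hfint : ∀ n, Integrable (f n) μ := fun n =>
    (integrable_const (1 : ℝ)).mono' (hfmeas n) (ae_of_all _ (hfb n))
  have hlim : Tendsto (fun n => ∫ z, f n z ∂μ) atTop
      (𝓝 (∫ z, α * Set.indicator B (fun _ => (1 : ℝ)) z ∂μ)) := by
    apply tendsto_integral_of_dominated_convergence (fun _ => (1 : ℝ)) hfmeas
      (integrable_const 1)
    · intro n; exact ae_of_all _ (hfb n)
    · filter_upwards [hconv] with z hz
      exact hz.mul_const _
  have hlimval : (∫ z, α * Set.indicator B (fun _ => (1 : ℝ)) z ∂μ) = α * (μ B).toReal := by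
    rw [integral_const_mul]
    exact congrArg (fun r => α * r) (integral_indicator_one hB)
  rw [hlimval] at hlim
  have hEint : ∀ j, Integrable (fun z => Set.indicator (E j) (fun _ => (1 : ℝ)) z) μ :=
    fun j => (integrable_const (1 : ℝ)).indicator (hE j)
  have hintle : ∀ n, (∫ z, f n z ∂μ) ≤
      (∑ j ∈ Finset.range n, (μ (E j)).toReal) / n := by
    intro n
    have hle : ∀ z, f n z ≤ (∑ j ∈ Finset.range n,
        Set.indicator (E j) (fun _ => (1 : ℝ)) z) / n := by
      intro z
      rw [hf]
      simp only
      rw [div_mul_eq_mul_div, Finset.sum_mul]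
      gcongr with j hj
      exact hsupp j z
    calc (∫ z, f n z ∂μ)
        ≤ ∫ z, (∑ j ∈ Finset.range n,
            Set.indicator (E j) (fun _ => (1 : ℝ)) z) / n ∂μ := by
          exact integral_mono (hfint n)
            (((integrable_finset_sum _ fun j _ => hEint j).div_const _)) hle
      _ = (∑ j ∈ Finset.range n, (μ (E j)).toReal) / n := by
          rw [integral_div, integral_finset_sum _ fun j _ => hEint j]
          congr 1
          exact Finset.sum_congr rfl fun j _ => integral_indicator_one (hE j)
  have h1 : α * (μ B).toReal = liminf (fun n => ∫ z, f n z ∂μ) atTop := hlim.liminf_eq.symm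
  rw [h1]
  have hub : IsBoundedUnder (· ≤ ·) atTop
      (fun n : ℕ => (∑ j ∈ Finset.range n, (μ (E j)).toReal) / n) := by
    refine isBoundedUnder_of ⟨1, fun n => ?_⟩
    rcases Nat.eq_zero_or_pos n with h | h
    · simp [h]
    rw [div_le_one (by exact_mod_cast h)]
    have hb : ∀ j ∈ Finset.range n, (μ (E j)).toReal ≤ 1 := fun j _ =>
      ENNReal.toReal_le_of_le_ofReal zero_le_one (by simpa using prob_le_one)
    calc (∑ j ∈ Finset.range n, (μ (E j)).toReal)
        ≤ ∑ j ∈ Finset.range n, (1 : ℝ) := Finset.sum_le_sum hb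
      _ = n := by simp
  exact liminf_le_liminf (Eventually.of_forall hintle) hlim.isBoundedUnder_ge
    hub.isCoboundedUnder_ge
end
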